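/- Let N ≥ 3, μ > 0, α < 0, let j be an integer with 0 ≤ j ≤ ⌊(N-1)/2⌋, and let ω > α²/(N-2j)². Then the stationary state Φ_ω^j (whose first j components equal φ_{ω, a^j} and whose remaining N-j components equal φ_{ω, -a^j}, with a^j = (1/(μ√ω)) arctanh(|α|/((N-2j)√ω))) satisfies: each component solves -φ'' - |φ|^{2μ} φ = -ω φ on (0,∞), all components have the same value at 0, and Σ_{i=1}^N (Φ_ω^j)_i′(0) = α (Φ_ω^j)_1(0). Consequently Ψ_t = e^{iωt} Φ_ω^j is a standing wave: each component of Ψ_t solves i ∂ψ/∂t = -∂²ψ/∂x² - |ψ|^{2μ} ψ on (0,∞) for all t. -/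

import Mathlib

open Real MeasureTheory

/-- `sech y = 1 / cosh y`. -/
noncomputable def sech (y : ℝ) : ℝ := 1 / Real.cosh y

/-- Inverse hyperbolic tangent. -/
noncomputable def artanh (x : ℝ) : ℝ := (1 / 2) * Real.log ((1 + x) / (1 - x))

/-- The half-line soliton profile `φ_{ω,a}(x) = [(μ+1)ω]^{1/(2μ)} sech^{1/μ}(μ√ω (x-a))`. -/
noncomputable def solProfile (μ ω a : ℝ) (x : ℝ) : ℝ :=
  ((μ + 1) * ω) ^ (1 / (2 * μ)) * sech (μ * Real.sqrt ω * (x - a)) ^ (1 / μ)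

/-- `a^j = (1/(μ√ω)) arctanh(|α|/((N-2j)√ω))`. -/
noncomputable def aCenter (μ α : ℝ) (N j : ℕ) (ω : ℝ) : ℝ :=
  (1 / (μ * Real.sqrt ω)) * _root_.artanh (|α| / (((N : ℝ) - 2 * j) * Real.sqrt ω))

/-- The stationary state `Φ_ω^j` with `j` bumps: its first `j` components are `φ_{ω, a^j}` and
the remaining `N - j` components are `φ_{ω, -a^j}`. -/
noncomputable def statState (μ α : ℝ) (N j : ℕ) (ω : ℝ) : Fin N → ℝ → ℝ := fun i =>
  if (i : ℕ) < j then solProfile μ ω (aCenter μ α N j ω)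
  else solProfile μ ω (-(aCenter μ α N j ω))

lemma cosh_ne (y : ℝ) : Real.cosh y ≠ 0 := (Real.cosh_pos y).ne'

lemma solProfile_eq (μ ω a x : ℝ) :
    solProfile μ ω a x = ((μ+1)*ω) ^ (1/(2*μ)) *
      Real.cosh (μ * Real.sqrt ω * (x - a)) ^ (-(1/μ)) := by
  unfold solProfile sech
  rw [one_div (Real.cosh _), Real.inv_rpow (Real.cosh_pos _).le,
    ← Real.rpow_neg (Real.cosh_pos _).le]

lemma solProfile_pos (μ ω a x : ℝ) (hμ : 0 < μ) (hω : 0 < ω) : 0 < solProfile μ ω a x := by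
  rw [solProfile_eq]
  exact mul_pos (Real.rpow_pos_of_pos (by nlinarith) _)
    (Real.rpow_pos_of_pos (Real.cosh_pos _) _)

lemma hasDerivAt_solProfile (μ ω a : ℝ) (hμ : 0 < μ) (x : ℝ) :
    HasDerivAt (solProfile μ ω a)
      (-Real.sqrt ω * Real.tanh (μ * Real.sqrt ω * (x - a)) * solProfile μ ω a x) x := by
  have h1 : HasDerivAt (fun y : ℝ => μ * Real.sqrt ω * (y - a)) (μ * Real.sqrt ω) x := by
    simpa using ((hasDerivAt_id x).sub_const a).const_mul (μ * Real.sqrt ω)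
  have h3 := (h1.cosh.rpow_const (p := -(1/μ)) (Or.inl (cosh_ne _)))
  have h4 := h3.const_mul (((μ+1)*ω) ^ (1/(2*μ)))
  have hfun : solProfile μ ω a = fun y => ((μ+1)*ω) ^ (1/(2*μ)) *
      Real.cosh (μ * Real.sqrt ω * (y - a)) ^ (-(1/μ)) := funext fun y => solProfile_eq μ ω a y
  have h5 : HasDerivAt (solProfile μ ω a)
      (((μ+1)*ω) ^ (1/(2*μ)) * (Real.sinh (μ * Real.sqrt ω * (x - a)) * (μ * Real.sqrt ω) *
        -(1/μ) * Real.cosh (μ * Real.sqrt ω * (x - a)) ^ (-(1/μ) - 1))) x := hfun ▸ h4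
  convert h5 using 1
  set u := μ * Real.sqrt ω * (x - a) with hu
  rw [solProfile_eq, Real.tanh_eq_sinh_div_cosh, ← hu]
  have hsub : Real.cosh u ^ (-(1/μ) - 1) = Real.cosh u ^ (-(1/μ)) / Real.cosh u := by
    rw [Real.rpow_sub (Real.cosh_pos _), Real.rpow_one]
  rw [hsub]
  have := cosh_ne u
  field_simp

lemma hasDerivAt_deriv_solProfile (μ ω a : ℝ) (hμ : 0 < μ) (hω : 0 ≤ ω) (x : ℝ) :
    HasDerivAt (fun y => -Real.sqrt ω * Real.tanh (μ * Real.sqrt ω * (y - a)) * solProfile μ ω a y)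
      (ω * solProfile μ ω a x *
        (1 - (μ + 1) * (Real.cosh (μ * Real.sqrt ω * (x - a)) ^ 2)⁻¹)) x := by
  have h1 : HasDerivAt (fun y : ℝ => μ * Real.sqrt ω * (y - a)) (μ * Real.sqrt ω) x := by
    simpa using ((hasDerivAt_id x).sub_const a).const_mul (μ * Real.sqrt ω)
  set u := μ * Real.sqrt ω * (x - a) with hu
  have hid : Real.cosh u ^ 2 - Real.sinh u ^ 2 = 1 := Real.cosh_sq_sub_sinh_sq u
  have htanh : HasDerivAt (fun y : ℝ => Real.tanh (μ * Real.sqrt ω * (y - a)))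
      ((Real.cosh u ^ 2)⁻¹ * (μ * Real.sqrt ω)) x := by
    have hdiv := (h1.sinh).div (h1.cosh) (cosh_ne u)
    have hfn : (fun y : ℝ => Real.tanh (μ * Real.sqrt ω * (y - a)))
        = fun y => Real.sinh (μ * Real.sqrt ω * (y - a)) / Real.cosh (μ * Real.sqrt ω * (y - a)) :=
      funext fun y => Real.tanh_eq_sinh_div_cosh _
    rw [hfn]
    convert hdiv using 1
    · rfl
    · rfl
    · rfl
    have hnum : Real.cosh u * (μ * Real.sqrt ω) * Real.cosh u -
        Real.sinh u * (Real.sinh u * (μ * Real.sqrt ω)) = μ * Real.sqrt ω := by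
      linear_combination (μ * Real.sqrt ω) * hid
    rw [← hu, hnum, inv_mul_eq_div]
  have hφ := hasDerivAt_solProfile μ ω a hμ x
  have hprod := (htanh.mul hφ).const_mul (-Real.sqrt ω)
  convert hprod using 1
  · rfl
  · rfl
  · ext y; simp only [Pi.mul_apply]; ring
  have hT : Real.tanh u ^ 2 = 1 - (Real.cosh u ^ 2)⁻¹ := by
    rw [Real.tanh_eq_sinh_div_cosh]
    have := cosh_ne u
    field_simp
    nlinarith [hid]
  have hsq : Real.sqrt ω * Real.sqrt ω = ω := Real.mul_self_sqrt hω
  linear_combination (μ * (Real.cosh u ^ 2)⁻¹ * solProfile μ ω a x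
      - Real.tanh u ^ 2 * solProfile μ ω a x) * hsq
    + (-(ω * solProfile μ ω a x)) * hT

lemma solProfile_rpow (μ ω a x : ℝ) (hμ : 0 < μ) (hω : 0 < ω) :
    solProfile μ ω a x ^ (2*μ) =
      (μ+1) * ω * (Real.cosh (μ * Real.sqrt ω * (x - a)) ^ 2)⁻¹ := by
  set u := μ * Real.sqrt ω * (x - a) with hu
  rw [solProfile_eq,
    Real.mul_rpow (Real.rpow_nonneg (by nlinarith) _) (Real.rpow_nonneg (Real.cosh_pos _).le _),
    ← Real.rpow_mul (by nlinarith : (0:ℝ) ≤ (μ+1)*ω), ← Real.rpow_mul (Real.cosh_pos _).le]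
  have e1 : 1/(2*μ) * (2*μ) = 1 := by field_simp
  have e2 : -(1/μ) * (2*μ) = -2 := by field_simp
  rw [e1, e2, Real.rpow_one, show (-2:ℝ) = -((2:ℕ):ℝ) by norm_num,
    Real.rpow_neg (Real.cosh_pos _).le, Real.rpow_natCast]

lemma solProfile_eqn (μ ω a : ℝ) (hμ : 0 < μ) (hω : 0 < ω) (x : ℝ) :
    -deriv (deriv (solProfile μ ω a)) x
      - |solProfile μ ω a x| ^ (2*μ) * solProfile μ ω a x
      = -ω * solProfile μ ω a x := by
  have hd1 : deriv (solProfile μ ω a)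
      = fun y => -Real.sqrt ω * Real.tanh (μ * Real.sqrt ω * (y - a)) * solProfile μ ω a y :=
    funext fun y => (hasDerivAt_solProfile μ ω a hμ y).deriv
  rw [hd1, (hasDerivAt_deriv_solProfile μ ω a hμ hω.le x).deriv,
    abs_of_pos (solProfile_pos μ ω a x hμ hω), solProfile_rpow μ ω a x hμ hω]
  ring

lemma solProfile_zero_even (μ ω a : ℝ) : solProfile μ ω a 0 = solProfile μ ω (-a) 0 := by
  unfold solProfile sech
  rw [show μ * Real.sqrt ω * ((0:ℝ) - a) = -(μ * Real.sqrt ω * ((0:ℝ) - -a)) by ring,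
    Real.cosh_neg]

lemma tanh_artanh {t : ℝ} (h1 : -1 < t) (h2 : t < 1) : Real.tanh (_root_.artanh t) = t := by
  have hr : 0 < (1+t)/(1-t) := div_pos (by linarith) (by linarith)
  have he : Real.exp (_root_.artanh t) * Real.exp (_root_.artanh t) = (1+t)/(1-t) := by
    rw [← Real.exp_add]
    unfold _root_.artanh
    rw [show (1/2) * Real.log ((1+t)/(1-t)) + (1/2) * Real.log ((1+t)/(1-t))
        = Real.log ((1+t)/(1-t)) by ring, Real.exp_log hr]
  set y := _root_.artanh t
  have hE : 0 < Real.exp y := Real.exp_pos y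
  rw [Real.tanh_eq_sinh_div_cosh, Real.sinh_eq, Real.cosh_eq, Real.exp_neg]
  have h1t : (1:ℝ) - t ≠ 0 := by linarith
  rw [eq_div_iff h1t] at he
  field_simp
  nlinarith [he]

lemma standing_wave_lemma (μ ω c : ℝ) (hμ : 0 < μ) (hω : 0 < ω) (x t : ℝ) :
    Complex.I * deriv (fun s : ℝ =>
        Complex.exp (Complex.I * ω * s) * ((solProfile μ ω c x : ℝ) : ℂ)) t
      = - deriv (deriv (fun y : ℝ =>
            Complex.exp (Complex.I * ω * t) * ((solProfile μ ω c y : ℝ) : ℂ))) x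
        - ((‖Complex.exp (Complex.I * ω * t)
              * ((solProfile μ ω c x : ℝ) : ℂ)‖ ^ (2 * μ) : ℝ) : ℂ)
          * (Complex.exp (Complex.I * ω * t) * ((solProfile μ ω c x : ℝ) : ℂ)) := by
  have h0 : HasDerivAt (fun s : ℝ => Complex.I * (ω : ℂ) * (s : ℂ)) (Complex.I * ω) t := by
    simpa using (Complex.ofRealCLM.hasDerivAt (x := t)).const_mul (Complex.I * (ω : ℂ))
  have htime := (h0.cexp).mul_const ((solProfile μ ω c x : ℝ) : ℂ)
  rw [htime.deriv]
  have hin : ∀ y : ℝ, HasDerivAt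
      (fun y : ℝ => Complex.exp (Complex.I * ω * t) * ((solProfile μ ω c y : ℝ) : ℂ))
      (Complex.exp (Complex.I * ω * t) *
        ((-Real.sqrt ω * Real.tanh (μ * Real.sqrt ω * (y - c)) * solProfile μ ω c y : ℝ) : ℂ)) y :=
    fun y => ((hasDerivAt_solProfile μ ω c hμ y).ofReal_comp).const_mul _
  have hd1 : deriv (fun y : ℝ => Complex.exp (Complex.I * ω * t) * ((solProfile μ ω c y : ℝ) : ℂ))
      = fun y => Complex.exp (Complex.I * ω * t) *
        ((-Real.sqrt ω * Real.tanh (μ * Real.sqrt ω * (y - c)) * solProfile μ ω c y : ℝ) : ℂ) :=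
    funext fun y => (hin y).deriv
  have hout : HasDerivAt (fun y : ℝ => Complex.exp (Complex.I * ω * t) *
      ((-Real.sqrt ω * Real.tanh (μ * Real.sqrt ω * (y - c)) * solProfile μ ω c y : ℝ) : ℂ))
      (Complex.exp (Complex.I * ω * t) *
        ((ω * solProfile μ ω c x *
          (1 - (μ + 1) * (Real.cosh (μ * Real.sqrt ω * (x - c)) ^ 2)⁻¹) : ℝ) : ℂ)) x :=
    ((hasDerivAt_deriv_solProfile μ ω c hμ hω.le x).ofReal_comp).const_mul _
  rw [hd1, hout.deriv]
  have habs : ‖Complex.exp (Complex.I * ω * t) * ((solProfile μ ω c x : ℝ) : ℂ)‖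
      = solProfile μ ω c x := by
    rw [norm_mul, Complex.norm_real, Real.norm_eq_abs, abs_of_pos (solProfile_pos μ ω c x hμ hω), Complex.norm_exp]
    simp [Complex.mul_re]
  rw [habs, solProfile_rpow μ ω c x hμ hω]
  push_cast
  linear_combination (Complex.exp (Complex.I * ω * t) * ((solProfile μ ω c x : ℝ) : ℂ) * (ω : ℂ))
    * Complex.I_mul_I

/-- for `N ≥ 3`, `μ > 0`, `α < 0`, `0 ≤ j ≤ ⌊(N-1)/2⌋` and `ω > α²/(N-2j)²`,
the state `Φ_ω^j` satisfies the stationary NLS equation componentwise on `(0,∞)`, the continuity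
and `δ`-vertex conditions of strength `α` at the vertex, and `e^{iωt} Φ_ω^j` is a standing-wave
solution of the time-dependent NLS on each edge. -/
theorem statState_is_standing_wave (N : ℕ) (hN : 3 ≤ N) (μ α : ℝ)
    (hμ : 0 < μ) (hα : α < 0) (j : ℕ) (hj : j ≤ (N - 1) / 2)
    (ω : ℝ) (hω : α ^ 2 / ((N : ℝ) - 2 * j) ^ 2 < ω) :
    (∀ i : Fin N, ∀ x : ℝ, 0 < x →
      - deriv (deriv (statState μ α N j ω i)) x
          - |statState μ α N j ω i x| ^ (2 * μ) * statState μ α N j ω i x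
        = -ω * statState μ α N j ω i x) ∧
    (∀ i k : Fin N, statState μ α N j ω i 0 = statState μ α N j ω k 0) ∧
    (∑ i : Fin N, deriv (statState μ α N j ω i) 0)
        = α * statState μ α N j ω ⟨0, by omega⟩ 0 ∧
    (∀ i : Fin N, ∀ x : ℝ, 0 < x → ∀ t : ℝ,
      Complex.I * deriv (fun s : ℝ =>
          Complex.exp (Complex.I * ω * s) * ((statState μ α N j ω i x : ℝ) : ℂ)) t
        = - deriv (deriv (fun y : ℝ =>
              Complex.exp (Complex.I * ω * t) * ((statState μ α N j ω i y : ℝ) : ℂ))) x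
          - ((‖Complex.exp (Complex.I * ω * t)
                * ((statState μ α N j ω i x : ℝ) : ℂ)‖ ^ (2 * μ) : ℝ) : ℂ)
            * (Complex.exp (Complex.I * ω * t) * ((statState μ α N j ω i x : ℝ) : ℂ))) := by
  have h2j : 2 * j + 1 ≤ N := by omega
  have hdR : (1:ℝ) ≤ (N : ℝ) - 2 * j := by
    have : ((2*j+1 : ℕ) : ℝ) ≤ (N : ℕ) := Nat.cast_le.2 h2j
    push_cast at this; linarith
  have hden : (0:ℝ) < (N : ℝ) - 2 * j := by linarith
  have hω0 : 0 < ω := lt_of_le_of_lt (div_nonneg (sq_nonneg α) (sq_nonneg _)) hω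
  have hsω : 0 < Real.sqrt ω := Real.sqrt_pos.2 hω0
  set a := aCenter μ α N j ω with ha
  set T := |α| / (((N : ℝ) - 2 * j) * Real.sqrt ω) with hT
  have ht0 : 0 < T := div_pos (abs_pos.2 hα.ne) (mul_pos hden hsω)
  have hss : Real.sqrt ω ^ 2 = ω := Real.sq_sqrt hω0.le
  have ht1 : T < 1 := by
    rw [hT, div_lt_one (mul_pos hden hsω)]
    have h2 : α ^ 2 < ω * ((N:ℝ) - 2*j) ^ 2 := by
      rw [div_lt_iff₀ (by positivity)] at hω; linarith
    by_contra h
    push_neg at h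
    have habs : (((N:ℝ) - 2*j) * Real.sqrt ω) ^ 2 ≤ |α| ^ 2 := by
      nlinarith [abs_nonneg α, mul_pos hden hsω]
    rw [sq_abs] at habs
    nlinarith [habs]
  have hba : μ * Real.sqrt ω * a = _root_.artanh T := by
    rw [ha]; unfold aCenter; rw [← hT]; field_simp
  have htanh : Real.tanh (μ * Real.sqrt ω * a) = T := by
    rw [hba]; exact tanh_artanh (by linarith) ht1
  refine ⟨?_, ?_, ?_, ?_⟩
  · intro i x _
    simp only [statState]
    split_ifs
    · exact solProfile_eqn μ ω a hμ hω0 x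
    · exact solProfile_eqn μ ω (-a) hμ hω0 x
  · intro i k
    simp only [statState]
    split_ifs
    · rfl
    · exact solProfile_zero_even μ ω a
    · exact (solProfile_zero_even μ ω a).symm
    · rfl
  · -- vertex condition
    have hS : solProfile μ ω (-a) 0 = solProfile μ ω a 0 := (solProfile_zero_even μ ω a).symm
    set S := solProfile μ ω a 0 with hSdef
    have hdA : deriv (solProfile μ ω a) 0 = Real.sqrt ω * T * S := by
      rw [(hasDerivAt_solProfile μ ω a hμ 0).deriv,
        show μ * Real.sqrt ω * ((0:ℝ) - a) = -(μ * Real.sqrt ω * a) by ring,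
        Real.tanh_neg, htanh]
      ring
    have hdB : deriv (solProfile μ ω (-a)) 0 = -(Real.sqrt ω * T * S) := by
      rw [(hasDerivAt_solProfile μ ω (-a) hμ 0).deriv,
        show μ * Real.sqrt ω * ((0:ℝ) - -a) = μ * Real.sqrt ω * a by ring, htanh, hS]
      ring
    have hterm : ∀ i : Fin N, deriv (statState μ α N j ω i) 0
        = if (i : ℕ) < j then Real.sqrt ω * T * S else -(Real.sqrt ω * T * S) := by
      intro i
      simp only [statState]
      split_ifs
      · exact hdA
      · exact hdB
    rw [Finset.sum_congr rfl (fun i _ => hterm i)]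
    have hsum : ∑ i : Fin N, (if (i : ℕ) < j then Real.sqrt ω * T * S else -(Real.sqrt ω * T * S))
        = (j : ℝ) * (Real.sqrt ω * T * S) + ((N - j : ℕ) : ℝ) * (-(Real.sqrt ω * T * S)) := by
      rw [Fin.sum_univ_eq_sum_range
          (fun n => if n < j then Real.sqrt ω * T * S else -(Real.sqrt ω * T * S)) N,
        Finset.range_eq_Ico,
        ← Finset.sum_Ico_consecutive _ (Nat.zero_le j) (by omega : j ≤ N)]
      rw [Finset.sum_congr rfl (fun i hi => if_pos (Finset.mem_Ico.1 hi).2),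
        Finset.sum_congr rfl (fun i hi => if_neg (by
          have := (Finset.mem_Ico.1 hi).1; omega)),
        Finset.sum_const, Finset.sum_const, Nat.card_Ico, Nat.card_Ico]
      simp [nsmul_eq_mul]
    rw [hsum]
    have hNj : ((N - j : ℕ) : ℝ) = (N : ℝ) - j := by
      rw [Nat.cast_sub (by omega)]
    rw [hNj]
    have hstat0 : statState μ α N j ω ⟨0, by omega⟩ 0 = S := by
      simp only [statState]
      split_ifs
      · rfl
      · exact hS
    rw [hstat0]
    have hTval : ((N:ℝ) - 2*j) * Real.sqrt ω * T = |α| := by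
      rw [hT]; field_simp
    have habsα : |α| = -α := abs_of_neg hα
    linear_combination (-S) * hTval + (-S) * habsα
  · intro i x _ t
    simp only [statState]
    split_ifs
    · exact standing_wave_lemma μ ω a hμ hω0 x t
    · exact standing_wave_lemma μ ω (-a) hμ hω0 x t
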